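/- Let p, q ∈ ℂ[X] be Shabat polynomials of degree n ≥ 2, both in Zapponi form, and suppose there exist α, β ∈ ℂ with α ≠ 0 such that q(z) = p(αz + β) for all z ∈ ℂ. Then α = 1 and β = 0; in particular q = p. (Uniqueness of the Shabat–Zapponi polynomial of a plane tree.) -/

import Mathlib

open Polynomial

lemma shabat_aux_sum (P Q : Polynomial ℂ) (α β : ℂ) (hα : α ≠ 0)
    (hP : P ≠ 0) (hQ : Q ≠ 0)
    (h : ∀ z, Q.eval z = P.eval (α * z + β)) :
    Q.roots.toFinset.sum id
      = (P.roots.toFinset.sum id - (P.roots.toFinset.card : ℂ) * β) / α := by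
  have himg : Q.roots.toFinset = P.roots.toFinset.image (fun w => (w - β) / α) := by
    ext z
    simp only [Finset.mem_image, Multiset.mem_toFinset, mem_roots', IsRoot.def]
    constructor
    · intro ⟨_, hz⟩
      refine ⟨α * z + β, ⟨hP, by rw [← h]; exact hz⟩, by field_simp; ring⟩
    · rintro ⟨w, ⟨_, hw⟩, rfl⟩
      refine ⟨hQ, ?_⟩
      rw [h]
      convert hw using 2
      · rfl
      rw [mul_div_cancel₀ _ hα]; ring
  have hinj : ∀ a ∈ P.roots.toFinset, ∀ b ∈ P.roots.toFinset,
      (a - β) / α = (b - β) / α → a = b := by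
    intro a _ b _ hab
    field_simp at hab
    linear_combination hab
  rw [himg, Finset.sum_image hinj]
  simp only [id_eq]
  rw [← Finset.sum_div, Finset.sum_sub_distrib, Finset.sum_const, nsmul_eq_mul]

/-- Uniqueness of the Shabat–Zapponi polynomial: if two Shabat polynomials of degree
`n ≥ 2` are both in Zapponi form and differ by an affine change of variable
`z ↦ αz + β` with `α ≠ 0`, then `α = 1`, `β = 0`, and the polynomials are equal. -/
theorem shabat_zapponi_unique
    (p q : Polynomial ℂ) (n : ℕ) (hn : 2 ≤ n)
    (hpdeg : p.natDegree = n) (hqdeg : q.natDegree = n)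
    (hpShabat : ∀ z : ℂ, (Polynomial.derivative p).eval z = 0 →
      p.eval z = 1 ∨ p.eval z = -1)
    (hqShabat : ∀ z : ℂ, (Polynomial.derivative q).eval z = 0 →
      q.eval z = 1 ∨ q.eval z = -1)
    (hpwhite : ((p - 1).roots.toFinset.sum id) = 1)
    (hpblack : ((p + 1).roots.toFinset.sum id) = -1)
    (hqwhite : ((q - 1).roots.toFinset.sum id) = 1)
    (hqblack : ((q + 1).roots.toFinset.sum id) = -1)
    (α β : ℂ) (hα : α ≠ 0)
    (hcomp : ∀ z : ℂ, q.eval z = p.eval (α * z + β)) :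
    α = 1 ∧ β = 0 ∧ q = p := by
  have h1 : (1 : Polynomial ℂ) = C 1 := (C_1).symm
  have hdp1 : (p - 1).natDegree = n := by rw [h1, natDegree_sub_C, hpdeg]
  have hdp2 : (p + 1).natDegree = n := by
    rw [h1, natDegree_add_C, hpdeg]
  have hdq1 : (q - 1).natDegree = n := by rw [h1, natDegree_sub_C, hqdeg]
  have hdq2 : (q + 1).natDegree = n := by rw [h1, natDegree_add_C, hqdeg]
  have hne : ∀ r : Polynomial ℂ, r.natDegree = n → r ≠ 0 := by
    intro r hr h0
    rw [h0, natDegree_zero] at hr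
    omega
  have hpos : ∀ r : Polynomial ℂ, r.natDegree = n → 1 ≤ r.roots.toFinset.card := by
    intro r hr
    have hdeg : 0 < r.degree := natDegree_pos_iff_degree_pos.mp (by omega)
    obtain ⟨z, hz⟩ := Complex.exists_root hdeg
    have : z ∈ r.roots.toFinset := by
      simp only [Multiset.mem_toFinset, mem_roots', IsRoot.def]
      exact ⟨hne r hr, hz⟩
    exact Finset.card_pos.mpr ⟨z, this⟩
  have hw := shabat_aux_sum (p - 1) (q - 1) α β hα (hne _ hdp1) (hne _ hdq1)
    (by intro z; simp [hcomp z])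
  have hb := shabat_aux_sum (p + 1) (q + 1) α β hα (hne _ hdp2) (hne _ hdq2)
    (by intro z; simp [hcomp z])
  rw [hqwhite, hpwhite] at hw
  rw [hqblack, hpblack] at hb
  set kw : ℕ := (p - 1).roots.toFinset.card with hkw
  set kb : ℕ := (p + 1).roots.toFinset.card with hkb
  have hkw1 : 1 ≤ kw := hpos _ hdp1
  have hkb1 : 1 ≤ kb := hpos _ hdp2
  have hw' : α = 1 - (kw : ℂ) * β := by field_simp at hw; linear_combination hw
  have hb' : α = 1 + (kb : ℂ) * β := by field_simp at hb; linear_combination -hb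
  have hsum : ((kw : ℂ) + (kb : ℂ)) * β = 0 := by linear_combination hw' - hb'
  have hcast : ((kw : ℂ) + (kb : ℂ)) ≠ 0 := by
    have : ((kw + kb : ℕ) : ℂ) ≠ 0 := Nat.cast_ne_zero.mpr (by omega)
    push_cast at this
    exact this
  have hβ : β = 0 := by
    rcases mul_eq_zero.mp hsum with h | h
    · exact absurd h hcast
    · exact h
  have hα1 : α = 1 := by rw [hw', hβ]; ring
  refine ⟨hα1, hβ, ?_⟩
  apply Polynomial.funext
  intro z
  rw [hcomp z, hα1, hβ]
  ring_nf
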